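/- Let A be a 2-adically (or π_n-adically) complete ring of power series O_K[[π_n]], φ a continuous ring endomorphism with φ(π_n) = (1+π_n)² − 1, and L ∈ π_n O_K[[π_n]]. Then Y := −Σ_{i≥0} φ^i(L/2) converges in (1/2)O_K[[π_n]] and satisfies (φ − 1)(Y) = L/2. -/

import Mathlib

open PowerSeries

/-- The Frobenius substitution `g(X) ↦ g((1+X)² - 1)` on `ℚ₂[[X]]` (acting trivially on the
coefficients, as the Frobenius of the unramified extension `K = ℚ₂` does), given coefficientwise
by the (finite) composition formula. -/
noncomputable def frobSubst (g : PowerSeries ℚ_[2]) : PowerSeries ℚ_[2] :=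
  PowerSeries.mk fun j => ∑ m ∈ Finset.range (j + 1),
    (coeff (R := ℚ_[2]) m g) * coeff (R := ℚ_[2]) j (((1 + X) ^ 2 - 1 : PowerSeries ℚ_[2]) ^ m)

namespace Statement9Aux

noncomputable def P : PowerSeries ℚ_[2] := (1 + X) ^ 2 - 1

lemma norm_two : ‖(2 : ℚ_[2])‖ = 2⁻¹ := by
  have := @Padic.norm_p 2 ⟨by norm_num⟩
  simpa using this

lemma P_eq : P = X ^ 2 + C (R := ℚ_[2]) 2 * X := by
  have h : (C (R := ℚ_[2])) 2 = 2 := map_ofNat _ 2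
  rw [h]; unfold P; ring

lemma coeff_P (a : ℕ) :
    coeff (R := ℚ_[2]) a P = if a = 2 then 1 else if a = 1 then 2 else 0 := by
  rw [P_eq]
  simp only [map_add, coeff_X_pow, coeff_C_mul, coeff_X]
  split_ifs <;> simp_all

lemma norm_coeff_P_le_one (a : ℕ) : ‖coeff (R := ℚ_[2]) a P‖ ≤ 1 := by
  rw [coeff_P]
  split_ifs <;> simp [norm_two] <;> norm_num

lemma norm_coeff_P_le (a : ℕ) : ‖coeff (R := ℚ_[2]) a P‖ ≤ (2 : ℝ) ^ ((a : ℤ) - 2) := by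
  rw [coeff_P]
  split_ifs with h1 h2
  · subst h1; simp
  · subst h2; rw [norm_two]; norm_num
  · simp only [norm_zero]; positivity

lemma norm_b_le_one (m j : ℕ) : ‖coeff (R := ℚ_[2]) j (P ^ m)‖ ≤ 1 := by
  induction m generalizing j with
  | zero =>
    simp only [pow_zero, coeff_one]
    split_ifs <;> norm_num
  | succ m ih =>
    rw [pow_succ, coeff_mul]
    apply IsUltrametricDist.norm_sum_le_of_forall_le_of_nonneg zero_le_one
    intro p _
    rw [norm_mul]
    exact mul_le_one₀ (ih _) (norm_nonneg _) (norm_coeff_P_le_one _)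

lemma norm_b_le (m j : ℕ) :
    ‖coeff (R := ℚ_[2]) j (P ^ m)‖ ≤ (2 : ℝ) ^ ((j : ℤ) - 2 * m) := by
  induction m generalizing j with
  | zero =>
    simp only [pow_zero, coeff_one]
    split_ifs with h
    · subst h; simp
    · simp only [norm_zero]; positivity
  | succ m ih =>
    rw [pow_succ, coeff_mul]
    apply IsUltrametricDist.norm_sum_le_of_forall_le_of_nonneg (by positivity)
    intro p hp
    rw [norm_mul]
    have hj : (p.1 : ℤ) + (p.2 : ℤ) = (j : ℤ) := by
      exact_mod_cast congrArg (Nat.cast : ℕ → ℤ) (Finset.HasAntidiagonal.mem_antidiagonal.mp hp)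
    calc ‖coeff (R := ℚ_[2]) p.1 (P ^ m)‖ * ‖coeff (R := ℚ_[2]) p.2 P‖
        ≤ (2 : ℝ) ^ ((p.1 : ℤ) - 2 * m) * (2 : ℝ) ^ ((p.2 : ℤ) - 2) :=
          mul_le_mul (ih _) (norm_coeff_P_le _) (norm_nonneg _) (by positivity)
      _ = (2 : ℝ) ^ ((j : ℤ) - 2 * (m + 1 : ℕ)) := by
          rw [← zpow_add₀ (two_ne_zero (α := ℝ))]
          congr 1
          push_cast
          omega

end Statement9Aux

/-- For `L ∈ X·O_K[[X]]`, the series `Y := -Σ_{i≥0} φ^i(L/2)` converges (coefficientwise, in the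
weak topology) to an element of `(1/2)·O_K[[X]]` satisfying `(φ - 1)(Y) = L/2`.  Here the
integrality conditions `O_K[[X]] ⊆ ℚ₂[[X]]` are expressed by the norm bounds `‖coeff‖ ≤ 1`,
and membership in `(1/2)O_K[[X]]` by `‖coeff‖ ≤ 2`. -/
theorem statement9 (L : PowerSeries ℚ_[2])
    (hL0 : coeff (R := ℚ_[2]) 0 L = 0) (hL : ∀ j, ‖coeff (R := ℚ_[2]) j L‖ ≤ 1) :
    ∃ Y : PowerSeries ℚ_[2],
      (∀ j, ‖coeff (R := ℚ_[2]) j Y‖ ≤ 2) ∧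
      (∀ j, HasSum (fun i : ℕ => coeff (R := ℚ_[2]) j (frobSubst^[i] ((2 : ℚ_[2])⁻¹ • L)))
        (-(coeff (R := ℚ_[2]) j Y))) ∧
      frobSubst Y - Y = (2 : ℚ_[2])⁻¹ • L := by
  classical
  open Statement9Aux Filter in
  set g : ℕ → PowerSeries ℚ_[2] := fun i => frobSubst^[i] ((2 : ℚ_[2])⁻¹ • L) with hg
  have coeff_frob : ∀ (h : PowerSeries ℚ_[2]) (j : ℕ),
      coeff (R := ℚ_[2]) j (frobSubst h) =
        ∑ m ∈ Finset.range (j + 1), coeff (R := ℚ_[2]) m h * coeff (R := ℚ_[2]) j (P ^ m) := by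
    intro h j
    rw [frobSubst, coeff_mk]
    rfl
  have hnorm_inv2 : ‖(2 : ℚ_[2])⁻¹‖ = 2 := by
    rw [norm_inv, norm_two]; norm_num
  have hcoeff0 : ∀ j, coeff (R := ℚ_[2]) j (g 0) = (2 : ℚ_[2])⁻¹ * coeff (R := ℚ_[2]) j L := by
    intro j; simp [hg]
  -- the key induction: constant term vanishes; all coefficients are in (1/2)O_K;
  -- and the j-th coefficient of φ^i(L/2) has norm at most 2^(j-i).
  have key : ∀ i, coeff (R := ℚ_[2]) 0 (g i) = 0 ∧
      (∀ j, ‖coeff (R := ℚ_[2]) j (g i)‖ ≤ 2) ∧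
      (∀ j, ‖coeff (R := ℚ_[2]) j (g i)‖ ≤ (2 : ℝ) ^ ((j : ℤ) - i)) := by
    intro i
    induction i with
    | zero =>
      refine ⟨by simp [hcoeff0, hL0], ?_, ?_⟩
      · intro j
        rw [hcoeff0, norm_mul, hnorm_inv2]
        nlinarith [hL j, norm_nonneg (coeff (R := ℚ_[2]) j L)]
      · intro j
        rcases Nat.eq_zero_or_pos j with rfl | hj
        · rw [hcoeff0, hL0, mul_zero, norm_zero]
          positivity
        · rw [hcoeff0, norm_mul, hnorm_inv2]
          have h1 : (2 : ℝ) * ‖coeff (R := ℚ_[2]) j L‖ ≤ 2 := by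
            nlinarith [hL j, norm_nonneg (coeff (R := ℚ_[2]) j L)]
          refine h1.trans ?_
          have : (2 : ℝ) ^ ((j : ℤ) - (0 : ℕ)) = (2 : ℝ) ^ (j : ℕ) := by
            rw [Nat.cast_zero, sub_zero, zpow_natCast]
          rw [this]
          calc (2 : ℝ) = 2 ^ 1 := (pow_one 2).symm
            _ ≤ 2 ^ (j : ℕ) := by
                exact pow_le_pow_right₀ one_le_two hj
    | succ i ih =>
      obtain ⟨ih0, ih2, ihb⟩ := ih
      have hgs : g (i + 1) = frobSubst (g i) := Function.iterate_succ_apply' _ _ _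
      refine ⟨?_, ?_, ?_⟩
      · rw [hgs, coeff_frob]
        simp [ih0]
      · intro j
        rw [hgs, coeff_frob]
        apply IsUltrametricDist.norm_sum_le_of_forall_le_of_nonneg (by norm_num)
        intro m _
        rw [norm_mul]
        calc ‖coeff (R := ℚ_[2]) m (g i)‖ * ‖coeff (R := ℚ_[2]) j (P ^ m)‖
            ≤ 2 * 1 := mul_le_mul (ih2 m) (norm_b_le_one m j) (norm_nonneg _) (by norm_num)
          _ = 2 := mul_one 2
      · intro j
        rw [hgs, coeff_frob]
        apply IsUltrametricDist.norm_sum_le_of_forall_le_of_nonneg (by positivity)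
        intro m _
        rcases Nat.eq_zero_or_pos m with rfl | hm1
        · rw [ih0, zero_mul, norm_zero]
          positivity
        · rw [norm_mul]
          calc ‖coeff (R := ℚ_[2]) m (g i)‖ * ‖coeff (R := ℚ_[2]) j (P ^ m)‖
              ≤ (2 : ℝ) ^ ((m : ℤ) - i) * (2 : ℝ) ^ ((j : ℤ) - 2 * m) :=
                mul_le_mul (ihb m) (norm_b_le m j) (norm_nonneg _) (by positivity)
            _ = (2 : ℝ) ^ ((j : ℤ) - i - m) := by
                rw [← zpow_add₀ (two_ne_zero (α := ℝ))]
                congr 1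
                ring
            _ ≤ (2 : ℝ) ^ ((j : ℤ) - (i + 1 : ℕ)) := by
                apply zpow_le_zpow_right₀ one_le_two
                push_cast
                omega
  -- summability of the coefficient series
  have hsum : ∀ j, Summable (fun i : ℕ => coeff (R := ℚ_[2]) j (g i)) := by
    intro j
    apply NonarchimedeanAddGroup.summable_of_tendsto_cofinite_zero
    rw [Nat.cofinite_eq_atTop, tendsto_zero_iff_norm_tendsto_zero]
    apply squeeze_zero (fun i => norm_nonneg _) (fun i => (key i).2.2 j)
    have heq : (fun i : ℕ => (2 : ℝ) ^ ((j : ℤ) - i)) =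
        fun i : ℕ => (2 : ℝ) ^ (j : ℤ) * (2⁻¹ : ℝ) ^ i := by
      funext i
      rw [zpow_sub₀ (two_ne_zero (α := ℝ)), div_eq_mul_inv, inv_pow]
      norm_cast
    rw [heq]
    simpa using
      (tendsto_pow_atTop_nhds_zero_of_lt_one (by norm_num : (0:ℝ) ≤ 2⁻¹)
        (by norm_num : (2⁻¹:ℝ) < 1)).const_mul ((2 : ℝ) ^ (j : ℤ))
  set Y : PowerSeries ℚ_[2] := PowerSeries.mk fun j => -(∑' i, coeff (R := ℚ_[2]) j (g i)) with hY
  have hYc : ∀ j, coeff (R := ℚ_[2]) j Y = -(∑' i, coeff (R := ℚ_[2]) j (g i)) := by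
    intro j; rw [hY, coeff_mk]
  refine ⟨Y, ?_, ?_, ?_⟩
  · intro j
    rw [hYc, norm_neg]
    exact IsUltrametricDist.norm_tsum_le_of_forall_le fun i => (key i).2.1 j
  · intro j
    rw [hYc, neg_neg]
    exact (hsum j).hasSum
  · ext j
    rw [map_sub, coeff_frob, hYc]
    have step1 : ∀ m, coeff (R := ℚ_[2]) m Y * coeff (R := ℚ_[2]) j (P ^ m) =
        -(∑' i, coeff (R := ℚ_[2]) m (g i) * coeff (R := ℚ_[2]) j (P ^ m)) := by
      intro m
      rw [hYc, neg_mul, tsum_mul_right]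
    calc (∑ m ∈ Finset.range (j + 1), coeff (R := ℚ_[2]) m Y * coeff (R := ℚ_[2]) j (P ^ m)) -
            -(∑' i, coeff (R := ℚ_[2]) j (g i))
        = -(∑ m ∈ Finset.range (j + 1),
              ∑' i, coeff (R := ℚ_[2]) m (g i) * coeff (R := ℚ_[2]) j (P ^ m)) +
            ∑' i, coeff (R := ℚ_[2]) j (g i) := by
          rw [sub_neg_eq_add]
          congr 1
          rw [← Finset.sum_neg_distrib]
          exact Finset.sum_congr rfl fun m _ => step1 m
      _ = -(∑' i, ∑ m ∈ Finset.range (j + 1),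
              coeff (R := ℚ_[2]) m (g i) * coeff (R := ℚ_[2]) j (P ^ m)) +
            ∑' i, coeff (R := ℚ_[2]) j (g i) := by
          congr 1
          rw [Summable.tsum_finsetSum fun m _ => (hsum m).mul_right _]
      _ = -(∑' i, coeff (R := ℚ_[2]) j (g (i + 1))) + ∑' i, coeff (R := ℚ_[2]) j (g i) := by
          congr 2
          refine tsum_congr fun i => ?_
          rw [← coeff_frob]
          simp only [hg]
          rw [Function.iterate_succ_apply']
      _ = coeff (R := ℚ_[2]) j (g 0) := by
          rw [Summable.tsum_eq_zero_add (hsum j)]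
          ring
      _ = coeff (R := ℚ_[2]) j ((2 : ℚ_[2])⁻¹ • L) := by simp [hg]
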